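/- Let N ≥ 1, S, T, t be integers with 1 ≤ t+1 ≤ S and t+1 ≤ T−S. For r ∈ {t, t+1} define the weight w_r(x) = 1/( x!·(r+N−1−x)!·(S+N−1−x)!·(T−r−S+x)! ) on 𝔛_r = {0,1,…,r+N−1}, the polynomials H_k^r(x) = Σ_{i=0}^{k} (−k)_i(−x)_i(k−2N−T+1)_i / ( (−S−N+1)_i(−r−N+1)_i i! ) for 0 ≤ k ≤ r+N−1, the orthonormal functions f_k^r(x) = H_k^r(x)·√(w_r(x)) / √( Σ_{u∈𝔛_r} w_r(u)·H_k^r(u)² ), and the coefficients c_k^t = √( (1 − k/(t+N))·(1 − k/(T+N−t−1)) ). Then for all x ∈ 𝔛_t and y ∈ 𝔛_{t+1}: Σ_{k=0}^{t+N−1} c_k^t · f_k^t(x) · f_k^{t+1}(y) = √( w_t(x)/w_{t+1}(y) ) · [ (S+N−1−x)·δ_{y, x+1} + (T−t−S+x)·δ_{y, x} ] / √( (t+N)(T+N−t−1) ). -/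

import Mathlib

open Finset

/-- The Pochhammer symbol `(a)_i = a(a+1)⋯(a+i−1)`, with `(a)_0 = 1`. -/
noncomputable def poch (a : ℝ) (i : ℕ) : ℝ := ∏ j ∈ Finset.range i, (a + j)

/-- The weight `w_r(x) = 1/( x!·(r+N−1−x)!·(S+N−1−x)!·(T−r−S+x)! )` of the Hahn
ensemble at time `r` (case (I) of the paper). -/
noncomputable def wgt (N S T r x : ℕ) : ℝ :=
  1 / ((Nat.factorial x : ℝ) * (Nat.factorial (r + N - 1 - x) : ℝ) *
    (Nat.factorial (S + N - 1 - x) : ℝ) * (Nat.factorial (T - r - S + x) : ℝ))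

/-- The (shifted) Hahn polynomial
`H_k^r(x) = Σ_{i=0}^{k} (−k)_i(−x)_i(k−2N−T+1)_i / ( (−S−N+1)_i(−r−N+1)_i i! )`. -/
noncomputable def hahnH (N S T r k x : ℕ) : ℝ :=
  ∑ i ∈ Finset.range (k + 1),
    poch (-(k : ℝ)) i * poch (-(x : ℝ)) i * poch ((k : ℝ) - 2 * N - T + 1) i /
      (poch (-(S : ℝ) - N + 1) i * poch (-(r : ℝ) - N + 1) i * (Nat.factorial i : ℝ))

/-- The orthonormalized Hahn function
`f_k^r(x) = H_k^r(x)·√(w_r(x)) / √( Σ_{u∈𝔛_r} w_r(u)·H_k^r(u)² )`,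
with `𝔛_r = {0,…,r+N−1}`. -/
noncomputable def fOrth (N S T r k x : ℕ) : ℝ :=
  hahnH N S T r k x * Real.sqrt (wgt N S T r x) /
    Real.sqrt (∑ u ∈ Finset.range (r + N), wgt N S T r u * (hahnH N S T r k u) ^ 2)

lemma poch_zero (a : ℝ) : poch a 0 = 1 := by simp [poch]

lemma poch_succ (a : ℝ) (i : ℕ) : poch a (i + 1) = poch a i * (a + i) := by
  simp [poch, Finset.prod_range_succ]

lemma poch_shift (a : ℝ) (i : ℕ) : poch a (i + 1) = a * poch (a + 1) i := by
  rw [poch, Finset.prod_range_succ', mul_comm]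
  congr 1
  · norm_num
  · rw [poch]
    apply Finset.prod_congr rfl
    intro j _
    push_cast
    ring

lemma poch_cast_eq_zero {x i : ℕ} (h : x < i) : poch (-(x : ℝ)) i = 0 := by
  apply Finset.prod_eq_zero (Finset.mem_range.mpr h)
  simp

lemma poch_neg_ne_zero {m : ℝ} {i : ℕ} (h : ∀ j : ℕ, j < i → m ≠ j) :
    poch (-m) i ≠ 0 := by
  rw [poch]
  apply Finset.prod_ne_zero_iff.mpr
  intro j hj
  have := h j (Finset.mem_range.mp hj)
  intro hc
  apply this
  linarith

/-- the `x`-free coefficient of `(−x)_i` in the Hahn polynomial, with `m = r + N − 1`. -/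
noncomputable def gcoef (N S T m k : ℕ) (i : ℕ) : ℝ :=
  poch (-(k : ℝ)) i * poch ((k : ℝ) - 2 * N - T + 1) i /
    (poch (-(S : ℝ) - N + 1) i * poch (-(m : ℝ)) i * (Nat.factorial i : ℝ))

lemma hahnH_eq {N S T r m : ℕ} (k x : ℕ) (hm : r + N = m + 1) :
    hahnH N S T r k x = ∑ i ∈ Finset.range (k + 1), gcoef N S T m k i * poch (-(x : ℝ)) i := by
  have harg : -(r : ℝ) - N + 1 = -(m : ℝ) := by
    have : (r : ℝ) + N = (m : ℝ) + 1 := by exact_mod_cast congrArg (Nat.cast : ℕ → ℝ) hm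
    linarith
  rw [hahnH]
  apply Finset.sum_congr rfl
  intro i _
  rw [harg, gcoef]
  ring

lemma hahnH_zero (N S T r k : ℕ) : hahnH N S T r k 0 = 1 := by
  rw [hahnH]
  rw [Finset.sum_eq_single 0]
  · norm_num [poch_zero]
  · intro i _ hi
    have : poch (-(0 : ℕ) : ℝ) i = 0 := by
      apply poch_cast_eq_zero
      omega
    rw [this]
    simp
  · intro h
    simp at h

/-- gcoef vanishes just above the degree. -/
lemma gcoef_top (N S T m k : ℕ) : gcoef N S T m k (k + 1) = 0 := by
  rw [gcoef, poch_cast_eq_zero (Nat.lt_succ_self k)]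
  simp

/-- Per-term algebra for the raising relation R1. -/
lemma L1 (a b x : ℝ) (i : ℕ) :
    (a - x) * poch (-x - 1) i + (b + x) * poch (-x) i
      = (a + b - i) * poch (-x) i + (i : ℝ) * ((i : ℝ) - 1 - a) * poch (-x) (i - 1) := by
  cases i with
  | zero => simp [poch_zero]
  | succ m =>
    have h1 : poch (-x - 1) (m + 1) = (-x - 1) * poch (-x) m := by
      rw [poch_shift]; norm_num
    have h2 : poch (-x) (m + 1) = poch (-x) m * (-x + m) := poch_succ _ _
    have h3 : (m + 1 : ℕ) - 1 = m := rfl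
    rw [h1, h2, h3]
    push_cast
    ring

/-- Per-term algebra for the lowering relation R2. -/
lemma L2 (n y : ℝ) (i : ℕ) :
    y * poch (-y + 1) i + (n - y) * poch (-y) i = (n - i) * poch (-y) i := by
  cases i with
  | zero => simp [poch_zero]
  | succ m =>
    have h1 : poch (-y + 1) (m + 1) = poch (-y + 1) m * (-y + 1 + m) := poch_succ _ _
    have h2 : poch (-y) (m + 1) = -y * poch (-y + 1) m := poch_shift _ _
    rw [h1, h2]
    push_cast
    ring

/-- ratio between gcoefs at neighboring `m`. -/
lemma gcoef_lower {S N : ℕ} (T m k i : ℕ)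
    (hU : poch (-(S : ℝ) - N + 1) i ≠ 0)
    (hW : poch (-(m : ℝ)) i ≠ 0)
    (hV : poch (-((m : ℝ) + 1)) i ≠ 0) :
    gcoef N S T m k i * ((m : ℝ) + 1 - i) = ((m : ℝ) + 1) * gcoef N S T (m + 1) k i := by
  have h2 := poch_shift (-((m : ℝ) + 1)) i
  rw [show -((m : ℝ) + 1) + 1 = -(m : ℝ) by ring] at h2
  have h1 := poch_succ (-((m : ℝ) + 1)) i
  have hVW : poch (-((m : ℝ) + 1)) i * (-((m : ℝ) + 1) + i)
      = (-((m : ℝ) + 1)) * poch (-(m : ℝ)) i := by rw [← h1, h2]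
  have hfac : (Nat.factorial i : ℝ) ≠ 0 := by exact_mod_cast (Nat.factorial_pos i).ne'
  rw [gcoef, gcoef]
  rw [show -((m + 1 : ℕ) : ℝ) = -((m : ℝ) + 1) by push_cast; ring]
  set P := poch (-(k : ℝ)) i
  set Q := poch ((k : ℝ) - 2 * N - T + 1) i
  set U := poch (-(S : ℝ) - N + 1) i
  set W := poch (-(m : ℝ)) i
  set V := poch (-((m : ℝ) + 1)) i
  rw [div_mul_eq_mul_div, mul_div_assoc']
  rw [div_eq_div_iff (by exact mul_ne_zero (mul_ne_zero hU hW) hfac)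
      (by exact mul_ne_zero (mul_ne_zero hU hV) hfac)]
  linear_combination (-(P * Q * U * (Nat.factorial i : ℝ))) * hVW

lemma poch_nat_ne_zero {m i : ℕ} (h : i ≤ m) : poch (-(m : ℝ)) i ≠ 0 := by
  apply poch_neg_ne_zero
  intro j hj
  have : j < m := lt_of_lt_of_le hj h
  exact_mod_cast this.ne'

lemma pochU_ne_zero {S N : ℕ} (i : ℕ) (hi : i + 1 ≤ S + N) :
    poch (-(S : ℝ) - N + 1) i ≠ 0 := by
  have harg : -(S : ℝ) - N + 1 = -((S + N - 1 : ℕ) : ℝ) := by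
    rw [Nat.cast_sub (by omega)]
    push_cast
    ring
  rw [harg]
  exact poch_nat_ne_zero (by omega)

/-- The lowering relation R2. -/
lemma R2 (N S T t k : ℕ) (hN : 1 ≤ N) (htS : t + 1 ≤ S) (hk : k < t + N) (y : ℕ) :
    (y : ℝ) * hahnH N S T t k (y - 1) + ((t : ℝ) + N - y) * hahnH N S T t k y
      = ((t : ℝ) + N) * hahnH N S T (t + 1) k y := by
  rcases Nat.eq_zero_or_pos y with hy0 | hy
  · subst hy0
    norm_num [hahnH_zero]
  obtain ⟨z, rfl⟩ : ∃ z, y = z + 1 := ⟨y - 1, by omega⟩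
  have hzy : (z + 1 : ℕ) - 1 = z := rfl
  rw [hzy]
  rw [hahnH_eq k z (show t + N = (t + N - 1) + 1 by omega),
      hahnH_eq k (z + 1) (show t + N = (t + N - 1) + 1 by omega),
      hahnH_eq k (z + 1) (show (t + 1) + N = (t + N) + 1 by omega)]
  rw [Finset.mul_sum, Finset.mul_sum, Finset.mul_sum, ← Finset.sum_add_distrib]
  apply Finset.sum_congr rfl
  intro i hi
  have hik : i ≤ k := by have := Finset.mem_range.mp hi; omega
  have hmc : ((t + N - 1 : ℕ) : ℝ) + 1 = (t : ℝ) + N := by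
    rw [Nat.cast_sub (by omega)]
    push_cast
    ring
  have hz : -(z : ℝ) = -((z + 1 : ℕ) : ℝ) + 1 := by push_cast; ring
  rw [hz]
  have hU : poch (-(S : ℝ) - N + 1) i ≠ 0 := pochU_ne_zero i (by omega)
  have hW : poch (-((t + N - 1 : ℕ) : ℝ)) i ≠ 0 := poch_nat_ne_zero (by omega)
  have hV : poch (-(((t + N - 1 : ℕ) : ℝ) + 1)) i ≠ 0 := by
    rw [hmc, show (t : ℝ) + N = ((t + N : ℕ) : ℝ) by push_cast; ring]
    exact poch_nat_ne_zero (by omega)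
  have key := gcoef_lower T (t + N - 1) k i hU hW hV
  rw [show t + N - 1 + 1 = t + N from by omega, hmc] at key
  have hL2 := L2 ((t : ℝ) + N) ((z + 1 : ℕ) : ℝ) i
  linear_combination (gcoef N S T (t + N - 1) k i) * hL2
    + (poch (-((z + 1 : ℕ) : ℝ)) i) * key

set_option maxHeartbeats 1000000 in
/-- The per-coefficient identity behind the raising relation R1. -/
lemma R1coef (N S T t k j : ℕ) (hN : 1 ≤ N) (htS : t + 1 ≤ S)
    (hjk : j ≤ k) (hjx : j + 1 ≤ t + N) :
    gcoef N S T (t + N) k j * ((T : ℝ) + N - t - 1 - j)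
      + gcoef N S T (t + N) k (j + 1) * (((j : ℝ) + 1) * ((j : ℝ) - ((S : ℝ) + N - 1)))
    = (((t : ℝ) + N - k) * ((T : ℝ) + N - t - 1 - k) / ((t : ℝ) + N))
        * gcoef N S T (t + N - 1) k j := by
  have A1 : ((t + N : ℕ) : ℝ) = (t : ℝ) + N := by push_cast; ring
  have A2 : ((t + N - 1 : ℕ) : ℝ) = (t : ℝ) + N - 1 := by
    rw [Nat.cast_sub (by omega)]; push_cast; ring
  rw [gcoef, gcoef, gcoef, A1, A2]
  rw [poch_succ (-(k : ℝ)), poch_succ ((k : ℝ) - 2 * N - T + 1),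
      poch_succ (-(S : ℝ) - N + 1), poch_succ (-((t : ℝ) + N))]
  rw [show ((Nat.factorial (j + 1) : ℕ) : ℝ) = ((j : ℝ) + 1) * (Nat.factorial j : ℝ) by
    rw [Nat.factorial_succ]; push_cast; ring]
  have hVW : poch (-((t : ℝ) + N)) j * (-((t : ℝ) + N) + j)
      = (-((t : ℝ) + N)) * poch (-((t : ℝ) + N - 1)) j := by
    rw [show -((t : ℝ) + N - 1) = -((t : ℝ) + N) + 1 by ring, ← poch_succ, poch_shift]
  have hn : ((t : ℝ) + N) ≠ 0 := by positivity
  have hU : poch (-(S : ℝ) - N + 1) j ≠ 0 := pochU_ne_zero j (by omega)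
  have hUs : -(S : ℝ) - N + 1 + (j : ℝ) ≠ 0 := by
    have : (j : ℝ) + 2 ≤ (S : ℝ) + N := by exact_mod_cast (by omega : j + 2 ≤ S + N)
    intro hc; nlinarith
  have hV : poch (-((t : ℝ) + N)) j ≠ 0 := by
    rw [← A1]; exact poch_nat_ne_zero (by omega)
  have hW : poch (-((t : ℝ) + N - 1)) j ≠ 0 := by
    rw [← A2]; exact poch_nat_ne_zero (by omega)
  have hVs : -((t : ℝ) + N) + (j : ℝ) ≠ 0 := by
    have : (j : ℝ) + 1 ≤ (t : ℝ) + N := by exact_mod_cast hjx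
    intro hc; nlinarith
  have hfac : (Nat.factorial j : ℝ) ≠ 0 := by exact_mod_cast (Nat.factorial_pos j).ne'
  have hj1 : ((j : ℝ) + 1) ≠ 0 := by positivity
  set P := poch (-(k : ℝ)) j with hP
  set Q := poch ((k : ℝ) - 2 * N - T + 1) j with hQ
  set U := poch (-(S : ℝ) - N + 1) j with hU0
  set V := poch (-((t : ℝ) + N)) j with hV0
  set W := poch (-((t : ℝ) + N - 1)) j with hW0
  set f := (Nat.factorial j : ℝ) with hf
  have hD1 : U * V * f ≠ 0 := mul_ne_zero (mul_ne_zero hU hV) hfac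
  have hD2 : U * (-(S : ℝ) - N + 1 + (j : ℝ)) * (V * (-((t : ℝ) + N) + (j : ℝ))) * (((j : ℝ) + 1) * f) ≠ 0 :=
    mul_ne_zero (mul_ne_zero (mul_ne_zero hU hUs) (mul_ne_zero hV hVs)) (mul_ne_zero hj1 hfac)
  have hD3 : ((t : ℝ) + N) * (U * W * f) ≠ 0 :=
    mul_ne_zero hn (mul_ne_zero (mul_ne_zero hU hW) hfac)
  rw [div_mul_eq_mul_div, div_mul_eq_mul_div, div_mul_div_comm]
  rw [div_add_div _ _ hD1 hD2]
  rw [div_eq_div_iff (mul_ne_zero hD1 hD2) hD3]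
  linear_combination (-(((t : ℝ) + N - k) * ((T : ℝ) + N - t - 1 - k))
    * (-(S : ℝ) - N + 1 + (j : ℝ)) * V * (P * Q * U * U * f * f * ((j : ℝ) + 1))) * hVW

/-- The raising relation R1. -/
lemma R1 (N S T t k x : ℕ) (hN : 1 ≤ N) (htS : t + 1 ≤ S) (hx : x < t + N) :
    ((S : ℝ) + N - 1 - x) * hahnH N S T (t + 1) k (x + 1)
      + ((T : ℝ) - t - S + x) * hahnH N S T (t + 1) k x
    = (((t : ℝ) + N - k) * ((T : ℝ) + N - t - 1 - k) / ((t : ℝ) + N)) * hahnH N S T t k x := by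
  rw [hahnH_eq k (x + 1) (show (t + 1) + N = (t + N) + 1 by omega),
      hahnH_eq k x (show (t + 1) + N = (t + N) + 1 by omega),
      hahnH_eq k x (show t + N = (t + N - 1) + 1 by omega)]
  simp only [show (-(((x + 1) : ℕ) : ℝ)) = -(x : ℝ) - 1 from by push_cast; ring]
  rw [Finset.mul_sum, Finset.mul_sum, Finset.mul_sum, ← Finset.sum_add_distrib]
  have hsplit : ∀ i ∈ Finset.range (k + 1),
      ((S : ℝ) + N - 1 - x) * (gcoef N S T (t + N) k i * poch (-(x : ℝ) - 1) i)
        + ((T : ℝ) - t - S + x) * (gcoef N S T (t + N) k i * poch (-(x : ℝ)) i)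
      = gcoef N S T (t + N) k i * (((S : ℝ) + N - 1 + ((T : ℝ) - t - S) - i) * poch (-(x : ℝ)) i)
        + gcoef N S T (t + N) k i
            * ((i : ℝ) * ((i : ℝ) - 1 - ((S : ℝ) + N - 1)) * poch (-(x : ℝ)) (i - 1)) := by
    intro i _
    linear_combination (gcoef N S T (t + N) k i)
      * L1 ((S : ℝ) + N - 1) ((T : ℝ) - t - S) (x : ℝ) i
  rw [Finset.sum_congr rfl hsplit, Finset.sum_add_distrib]
  have hshift : ∑ i ∈ Finset.range (k + 1),
      gcoef N S T (t + N) k i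
        * ((i : ℝ) * ((i : ℝ) - 1 - ((S : ℝ) + N - 1)) * poch (-(x : ℝ)) (i - 1))
      = ∑ j ∈ Finset.range (k + 1),
      gcoef N S T (t + N) k (j + 1)
        * ((((j : ℝ)) + 1) * ((j : ℝ) - ((S : ℝ) + N - 1)) * poch (-(x : ℝ)) j) := by
    rw [Finset.sum_range_succ' _ k]
    rw [Finset.sum_range_succ
      (fun j => gcoef N S T (t + N) k (j + 1)
        * ((((j : ℝ)) + 1) * ((j : ℝ) - ((S : ℝ) + N - 1)) * poch (-(x : ℝ)) j))]
    rw [gcoef_top]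
    simp only [Nat.cast_zero, zero_mul, mul_zero, add_zero, Nat.add_sub_cancel]
    apply Finset.sum_congr rfl
    intro i _
    push_cast
    ring
  rw [hshift, ← Finset.sum_add_distrib]
  apply Finset.sum_congr rfl
  intro j hj
  by_cases hjx : x < j
  · rw [poch_cast_eq_zero hjx]
    ring
  · push_neg at hjx
    have hjk : j ≤ k := by have := Finset.mem_range.mp hj; omega
    have key := R1coef N S T t k j hN htS hjk (by omega : j + 1 ≤ t + N)
    linear_combination (poch (-(x : ℝ)) j) * key

lemma wgt_pos (N S T r x : ℕ) : 0 < wgt N S T r x := by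
  rw [wgt]
  positivity

/-- W1: `w_t(x)·(S+N−1−x) = (x+1)·w_{t+1}(x+1)`. -/
lemma W1 (N S T t x : ℕ) (hN : 1 ≤ N) (htS : t + 1 ≤ S) (htT : t + 1 + S ≤ T)
    (hx : x < t + N) :
    wgt N S T t x * ((S : ℝ) + N - 1 - x) = ((x : ℝ) + 1) * wgt N S T (t + 1) (x + 1) := by
  rw [wgt, wgt]
  have e1 : t + 1 + N - 1 - (x + 1) = t + N - 1 - x := by omega
  have e2 : S + N - 1 - (x + 1) = (S + N - 1 - x) - 1 := by omega
  have e3 : T - (t + 1) - S + (x + 1) = T - t - S + x := by omega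
  rw [e1, e2, e3]
  have hcast : ((S : ℝ) + N - 1 - x) = ((S + N - 1 - x : ℕ) : ℝ) := by
    rw [Nat.cast_sub (by omega), Nat.cast_sub (by omega)]
    push_cast
    ring
  have hcast2 : ((x : ℝ) + 1) = ((x + 1 : ℕ) : ℝ) := by push_cast; ring
  rw [hcast, hcast2, one_div_mul_eq_div, mul_one_div]
  have hB : ((Nat.factorial x : ℝ) * (Nat.factorial (t + N - 1 - x) : ℝ) *
      (Nat.factorial (S + N - 1 - x) : ℝ) * (Nat.factorial (T - t - S + x) : ℝ)) ≠ 0 := by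
    positivity
  have hF : ((Nat.factorial (x + 1) : ℝ) * (Nat.factorial (t + N - 1 - x) : ℝ) *
      (Nat.factorial (S + N - 1 - x - 1) : ℝ) * (Nat.factorial (T - t - S + x) : ℝ)) ≠ 0 := by
    positivity
  rw [div_eq_div_iff hB hF]
  have natEq : (S + N - 1 - x) * (Nat.factorial (x + 1) * Nat.factorial (t + N - 1 - x) *
      Nat.factorial (S + N - 1 - x - 1) * Nat.factorial (T - t - S + x))
      = (x + 1) * (Nat.factorial x * Nat.factorial (t + N - 1 - x) *
        Nat.factorial (S + N - 1 - x) * Nat.factorial (T - t - S + x)) := by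
    rw [Nat.factorial_succ x]
    rw [show Nat.factorial (S + N - 1 - x) = (S + N - 1 - x) * Nat.factorial (S + N - 1 - x - 1) from by
      rw [← Nat.succ_pred_eq_of_pos (show 0 < S + N - 1 - x by omega), Nat.factorial_succ]
      congr 2 <;> omega]
    ring
  exact_mod_cast natEq

/-- W2: `w_t(x)·(T−t−S+x) = (t+N−x)·w_{t+1}(x)`. -/
lemma W2 (N S T t x : ℕ) (hN : 1 ≤ N) (htS : t + 1 ≤ S) (htT : t + 1 + S ≤ T)
    (hx : x < t + N) :
    wgt N S T t x * ((T : ℝ) - t - S + x) = ((t : ℝ) + N - x) * wgt N S T (t + 1) x := by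
  rw [wgt, wgt]
  have e1 : t + 1 + N - 1 - x = (t + N - 1 - x) + 1 := by omega
  have e2 : T - (t + 1) - S + x = (T - t - S + x) - 1 := by omega
  rw [e1, e2]
  have hcast : ((T : ℝ) - t - S + x) = ((T - t - S + x : ℕ) : ℝ) := by
    rw [Nat.cast_add, Nat.cast_sub (by omega), Nat.cast_sub (by omega)]
    all_goals push_cast
    all_goals ring
  have hcast2 : ((t : ℝ) + N - x) = (((t + N - 1 - x) + 1 : ℕ) : ℝ) := by
    rw [Nat.cast_add, Nat.cast_sub (by omega), Nat.cast_sub (by omega)]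
    all_goals push_cast
    all_goals ring
  rw [hcast, hcast2, one_div_mul_eq_div, mul_one_div]
  have hB : ((Nat.factorial x : ℝ) * (Nat.factorial (t + N - 1 - x) : ℝ) *
      (Nat.factorial (S + N - 1 - x) : ℝ) * (Nat.factorial (T - t - S + x) : ℝ)) ≠ 0 := by
    positivity
  have hF : ((Nat.factorial x : ℝ) * (Nat.factorial ((t + N - 1 - x) + 1) : ℝ) *
      (Nat.factorial (S + N - 1 - x) : ℝ) * (Nat.factorial (T - t - S + x - 1) : ℝ)) ≠ 0 := by
    positivity
  rw [div_eq_div_iff hB hF]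
  have natEq : (T - t - S + x) * (Nat.factorial x * Nat.factorial ((t + N - 1 - x) + 1) *
      Nat.factorial (S + N - 1 - x) * Nat.factorial (T - t - S + x - 1))
      = ((t + N - 1 - x) + 1) * (Nat.factorial x * Nat.factorial (t + N - 1 - x) *
        Nat.factorial (S + N - 1 - x) * Nat.factorial (T - t - S + x)) := by
    rw [Nat.factorial_succ (t + N - 1 - x)]
    rw [show Nat.factorial (T - t - S + x) = (T - t - S + x) * Nat.factorial (T - t - S + x - 1) from by
      rw [← Nat.succ_pred_eq_of_pos (show 0 < T - t - S + x by omega), Nat.factorial_succ]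
      congr 2 <;> omega]
    ring
  exact_mod_cast natEq

noncomputable def gram (N S T r k l : ℕ) : ℝ :=
  ∑ u ∈ Finset.range (r + N), wgt N S T r u * hahnH N S T r k u * hahnH N S T r l u

lemma gram_comm (N S T r k l : ℕ) : gram N S T r k l = gram N S T r l k := by
  apply Finset.sum_congr rfl
  intro u _
  ring

lemma gram_pos (N S T r k : ℕ) (hN : 1 ≤ N) : 0 < gram N S T r k k := by
  rw [gram]
  apply Finset.sum_pos'
  · intro u _
    rw [mul_assoc]
    exact mul_nonneg (wgt_pos N S T r u).le (mul_self_nonneg _)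
  · refine ⟨0, Finset.mem_range.mpr (by omega), ?_⟩
    rw [hahnH_zero]
    simpa using (wgt_pos N S T r 0)

set_option maxHeartbeats 1000000 in
/-- The key bilinear identity: `γ_l · ⟨H_l^t, H_k^t⟩_t = (t+N) · ⟨H_l^{t+1}, H_k^{t+1}⟩_{t+1}`. -/
lemma bilinear (N S T t l k : ℕ) (hN : 1 ≤ N) (htS : t + 1 ≤ S) (htT : t + 1 + S ≤ T)
    (hk : k < t + N) :
    (((t : ℝ) + N - l) * ((T : ℝ) + N - t - 1 - l) / ((t : ℝ) + N)) * gram N S T t l k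
      = ((t : ℝ) + N) * gram N S T (t + 1) l k := by
  rw [gram, gram, Finset.mul_sum, Finset.mul_sum]
  have per1 : ∀ x ∈ Finset.range (t + N),
      (((t : ℝ) + N - l) * ((T : ℝ) + N - t - 1 - l) / ((t : ℝ) + N))
          * (wgt N S T t x * hahnH N S T t l x * hahnH N S T t k x)
      = ((x : ℝ) + 1) * wgt N S T (t + 1) (x + 1) * hahnH N S T (t + 1) l (x + 1)
            * hahnH N S T t k x
        + ((t : ℝ) + N - x) * wgt N S T (t + 1) x * hahnH N S T (t + 1) l x
            * hahnH N S T t k x := by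
    intro x hx
    have hxlt : x < t + N := Finset.mem_range.mp hx
    have r1 := R1 N S T t l x hN htS hxlt
    have w1 := W1 N S T t x hN htS htT hxlt
    have w2 := W2 N S T t x hN htS htT hxlt
    linear_combination (-(wgt N S T t x * hahnH N S T t k x)) * r1
      + (hahnH N S T (t + 1) l (x + 1) * hahnH N S T t k x) * w1
      + (hahnH N S T (t + 1) l x * hahnH N S T t k x) * w2
  rw [Finset.sum_congr rfl per1, Finset.sum_add_distrib]
  have hA : ∑ x ∈ Finset.range (t + N),
      ((x : ℝ) + 1) * wgt N S T (t + 1) (x + 1) * hahnH N S T (t + 1) l (x + 1)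
        * hahnH N S T t k x
      = ∑ y ∈ Finset.range (t + N + 1),
      (y : ℝ) * wgt N S T (t + 1) y * hahnH N S T (t + 1) l y * hahnH N S T t k (y - 1) := by
    rw [Finset.sum_range_succ' (fun y =>
      (y : ℝ) * wgt N S T (t + 1) y * hahnH N S T (t + 1) l y * hahnH N S T t k (y - 1)) (t + N)]
    simp only [Nat.cast_zero, zero_mul, add_zero, Nat.add_sub_cancel]
    apply Finset.sum_congr rfl
    intro x _
    push_cast
    ring
  have hB : ∑ x ∈ Finset.range (t + N),
      ((t : ℝ) + N - x) * wgt N S T (t + 1) x * hahnH N S T (t + 1) l x * hahnH N S T t k x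
      = ∑ y ∈ Finset.range (t + N + 1),
      ((t : ℝ) + N - y) * wgt N S T (t + 1) y * hahnH N S T (t + 1) l y * hahnH N S T t k y := by
    rw [Finset.sum_range_succ]
    have : ((t : ℝ) + N - ((t + N : ℕ) : ℝ)) = 0 := by push_cast; ring
    rw [this]
    ring
  rw [hA, hB, ← Finset.sum_add_distrib]
  rw [show (t + 1) + N = (t + N) + 1 by omega]
  apply Finset.sum_congr rfl
  intro y _
  have r2 := R2 N S T t k hN htS hk y
  linear_combination (wgt N S T (t + 1) y * hahnH N S T (t + 1) l y) * r2

lemma gram_t1_orth (N S T t : ℕ) (hN : 1 ≤ N) (htS : t + 1 ≤ S) (htT : t + 1 + S ≤ T)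
    {k l : ℕ} (hk : k ≤ t + N) (hl : l ≤ t + N) (hne : k ≠ l) :
    gram N S T (t + 1) k l = 0 := by
  have hn : ((t : ℝ) + N) ≠ 0 := by positivity
  by_cases hk' : k < t + N
  · by_cases hl' : l < t + N
    · have b1 := bilinear N S T t l k hN htS htT hk'
      have b2 := bilinear N S T t k l hN htS htT hl'
      have hc1 : gram N S T t k l = gram N S T t l k := gram_comm N S T t k l
      have hc2 : gram N S T (t + 1) k l = gram N S T (t + 1) l k := gram_comm N S T (t + 1) k l
      have hdiff : (((t : ℝ) + N - l) * ((T : ℝ) + N - t - 1 - l) / ((t : ℝ) + N))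
          - (((t : ℝ) + N - k) * ((T : ℝ) + N - t - 1 - k) / ((t : ℝ) + N)) ≠ 0 := by
        have hexp : (((t : ℝ) + N - l) * ((T : ℝ) + N - t - 1 - l) / ((t : ℝ) + N))
            - (((t : ℝ) + N - k) * ((T : ℝ) + N - t - 1 - k) / ((t : ℝ) + N))
            = ((k : ℝ) - l) * (((T : ℝ) + 2 * N - 1 - k - l) / ((t : ℝ) + N)) := by
          field_simp
          ring
        rw [hexp]
        apply mul_ne_zero
        · have : (k : ℝ) ≠ (l : ℝ) := by exact_mod_cast hne
          exact sub_ne_zero.mpr this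
        · apply div_ne_zero _ hn
          have c1 : (k : ℝ) + 1 ≤ (t : ℝ) + N := by exact_mod_cast hk'
          have c2 : (l : ℝ) + 1 ≤ (t : ℝ) + N := by exact_mod_cast hl'
          have c3 : 2 * (t : ℝ) + 2 ≤ (T : ℝ) := by exact_mod_cast (by omega : 2 * t + 2 ≤ T)
          have c4 : (1 : ℝ) ≤ (N : ℝ) := by exact_mod_cast hN
          intro hc
          nlinarith
      have hg0 : gram N S T t l k = 0 := by
        have key : ((((t : ℝ) + N - l) * ((T : ℝ) + N - t - 1 - l) / ((t : ℝ) + N))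
            - (((t : ℝ) + N - k) * ((T : ℝ) + N - t - 1 - k) / ((t : ℝ) + N)))
            * gram N S T t l k = 0 := by
          linear_combination b1 - b2
            + (((t : ℝ) + N - k) * ((T : ℝ) + N - t - 1 - k) / ((t : ℝ) + N)) * hc1
            - ((t : ℝ) + N) * hc2
        exact (mul_eq_zero.mp key).resolve_left hdiff
      rw [hc2]
      have h2 : ((t : ℝ) + N) * gram N S T (t + 1) l k = 0 := by
        rw [← b1, hg0, mul_zero]
      exact (mul_eq_zero.mp h2).resolve_left hn
    · -- l = t + N
      have hlv : l = t + N := by omega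
      have b1 := bilinear N S T t l k hN htS htT hk'
      rw [hlv] at b1
      rw [show ((t : ℝ) + N - ((t + N : ℕ) : ℝ)) = 0 by push_cast; ring, zero_mul,
        zero_div, zero_mul] at b1
      have h2 : gram N S T (t + 1) (t + N) k = 0 :=
        (mul_eq_zero.mp b1.symm).resolve_left hn
      rw [gram_comm, hlv]
      exact h2
  · -- k = t + N, hence l < t + N
    have hkv : k = t + N := by omega
    have hl' : l < t + N := by omega
    have b1 := bilinear N S T t k l hN htS htT hl'
    rw [hkv] at b1 ⊢
    rw [show ((t : ℝ) + N - ((t + N : ℕ) : ℝ)) = 0 by push_cast; ring, zero_mul,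
      zero_div, zero_mul] at b1
    exact (mul_eq_zero.mp b1.symm).resolve_left hn

open Matrix in
lemma dual_orth (N S T t : ℕ) (hN : 1 ≤ N) (htS : t + 1 ≤ S) (htT : t + 1 + S ≤ T)
    {y u : ℕ} (hy : y ≤ t + N) (hu : u ≤ t + N) :
    ∑ k ∈ Finset.range (t + N + 1),
      hahnH N S T (t + 1) k y * hahnH N S T (t + 1) k u / gram N S T (t + 1) k k
    = if y = u then 1 / wgt N S T (t + 1) y else 0 := by
  set n1 := t + N + 1 with hn1
  set A : Matrix (Fin n1) (Fin n1) ℝ := Matrix.of fun k j =>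
    hahnH N S T (t + 1) k j * Real.sqrt (wgt N S T (t + 1) j)
      / Real.sqrt (gram N S T (t + 1) k k) with hA
  have hAAT : A * Aᵀ = 1 := by
    ext k l
    rw [Matrix.mul_apply, Matrix.one_apply]
    have per : ∀ j : Fin n1, A k j * Aᵀ j l
        = wgt N S T (t + 1) j * hahnH N S T (t + 1) k j * hahnH N S T (t + 1) l j
          / (Real.sqrt (gram N S T (t + 1) (k : ℕ) (k : ℕ))
            * Real.sqrt (gram N S T (t + 1) (l : ℕ) (l : ℕ))) := by
      intro j
      rw [Matrix.transpose_apply, hA]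
      simp only [Matrix.of_apply]
      rw [div_mul_div_comm]
      congr 1
      have hw := Real.mul_self_sqrt (wgt_pos N S T (t + 1) j).le
      linear_combination (hahnH N S T (t + 1) k j * hahnH N S T (t + 1) l j) * hw
    rw [Finset.sum_congr rfl (fun j _ => per j), ← Finset.sum_div]
    have hsg : ∑ j : Fin n1, wgt N S T (t + 1) (j : ℕ) * hahnH N S T (t + 1) (k : ℕ) (j : ℕ)
        * hahnH N S T (t + 1) (l : ℕ) (j : ℕ) = gram N S T (t + 1) (k : ℕ) (l : ℕ) := by
      rw [_root_.gram, show (t + 1) + N = n1 by omega, ← Fin.sum_univ_eq_sum_range]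
    rw [hsg]
    by_cases hkl : k = l
    · subst hkl
      rw [if_pos rfl, Real.mul_self_sqrt (gram_pos N S T (t + 1) (k : ℕ) hN).le,
        div_self (gram_pos N S T (t + 1) (k : ℕ) hN).ne']
    · rw [if_neg hkl,
        gram_t1_orth N S T t hN htS htT (Fin.is_le k) (Fin.is_le l)
          (fun hc => hkl (Fin.val_injective hc)), zero_div]
  have hATA := mul_eq_one_comm.mp hAAT
  have hy' : y < n1 := by omega
  have hu' : u < n1 := by omega
  have hentry : (Aᵀ * A) ⟨y, hy'⟩ ⟨u, hu'⟩
      = (1 : Matrix (Fin n1) (Fin n1) ℝ) ⟨y, hy'⟩ ⟨u, hu'⟩ := by rw [hATA]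
  rw [Matrix.mul_apply, Matrix.one_apply] at hentry
  have per2 : ∀ k : Fin n1, Aᵀ (⟨y, hy'⟩ : Fin n1) k * A k (⟨u, hu'⟩ : Fin n1)
      = hahnH N S T (t + 1) (k : ℕ) y * hahnH N S T (t + 1) (k : ℕ) u
          / gram N S T (t + 1) (k : ℕ) (k : ℕ)
        * (Real.sqrt (wgt N S T (t + 1) y) * Real.sqrt (wgt N S T (t + 1) u)) := by
    intro k
    rw [Matrix.transpose_apply, hA]
    simp only [Matrix.of_apply]
    rw [div_mul_div_comm, Real.mul_self_sqrt (gram_pos N S T (t + 1) (k : ℕ) hN).le]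
    ring
  rw [Finset.sum_congr rfl (fun k _ => per2 k), ← Finset.sum_mul] at hentry
  rw [Fin.sum_univ_eq_sum_range (fun k => hahnH N S T (t + 1) k y * hahnH N S T (t + 1) k u
    / gram N S T (t + 1) k k) n1] at hentry
  simp only [Fin.mk.injEq] at hentry
  have hwy := wgt_pos N S T (t + 1) y
  have hwu := wgt_pos N S T (t + 1) u
  by_cases hyu : y = u
  · subst hyu
    rw [if_pos rfl] at hentry ⊢
    rw [Real.mul_self_sqrt hwy.le] at hentry
    rw [eq_div_iff hwy.ne']
    exact hentry
  · rw [if_neg hyu] at hentry ⊢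
    have hne : Real.sqrt (wgt N S T (t + 1) y) * Real.sqrt (wgt N S T (t + 1) u) ≠ 0 :=
      mul_ne_zero (Real.sqrt_pos.mpr hwy).ne' (Real.sqrt_pos.mpr hwu).ne'
    exact (mul_eq_zero.mp hentry).resolve_right hne

lemma fOrth_eq (N S T r k x : ℕ) :
    fOrth N S T r k x = hahnH N S T r k x * Real.sqrt (wgt N S T r x)
      / Real.sqrt (gram N S T r k k) := by
  rw [fOrth]
  congr 2
  apply Finset.sum_congr rfl
  intro u _
  ring


/-- Lemma 6 of the paper: the explicit two-diagonal form of
`Σ_k c_k^t f_k^t(x) f_k^{t+1}(y)`. -/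
theorem stmt_9 (N S T t : ℕ) (hN : 1 ≤ N) (htS : t + 1 ≤ S) (htT : t + 1 + S ≤ T) :
    ∀ x y : ℕ, x ≤ t + N - 1 → y ≤ t + N →
      ∑ k ∈ Finset.range (t + N),
        Real.sqrt ((1 - (k : ℝ) / ((t : ℝ) + N)) * (1 - (k : ℝ) / ((T : ℝ) + N - t - 1)))
          * fOrth N S T t k x * fOrth N S T (t + 1) k y
      = Real.sqrt (wgt N S T t x / wgt N S T (t + 1) y) *
          (((S : ℝ) + N - 1 - x) * (if y = x + 1 then 1 else 0) +
            ((T : ℝ) - t - S + x) * (if y = x then 1 else 0)) /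
          Real.sqrt (((t : ℝ) + N) * ((T : ℝ) + N - t - 1)) := by
  intro x y hx hy
  have hxlt : x < t + N := by omega
  have c3 : (2 : ℝ) * t + 2 ≤ (T : ℝ) := by exact_mod_cast (by omega : 2 * t + 2 ≤ T)
  have c4 : (1 : ℝ) ≤ (N : ℝ) := by exact_mod_cast hN
  have c5 : (0 : ℝ) ≤ (t : ℝ) := Nat.cast_nonneg t
  have hA1 : (0 : ℝ) < (T : ℝ) + N - t - 1 := by linarith
  have hn : (0 : ℝ) < (t : ℝ) + N := by positivity
  have hD : (0 : ℝ) < ((t : ℝ) + N) * ((T : ℝ) + N - t - 1) := mul_pos hn hA1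
  have hsqD : Real.sqrt (((t : ℝ) + N) * ((T : ℝ) + N - t - 1)) ≠ 0 := (Real.sqrt_pos.mpr hD).ne'
  -- Step 1: each summand equals `v k * fOrth (t+1) k y`
  have claim1 : ∀ k ∈ Finset.range (t + N),
      Real.sqrt ((1 - (k : ℝ) / ((t : ℝ) + N)) * (1 - (k : ℝ) / ((T : ℝ) + N - t - 1)))
        * fOrth N S T t k x
      = Real.sqrt (wgt N S T t x)
          * (((S : ℝ) + N - 1 - x) * hahnH N S T (t + 1) k (x + 1)
            + ((T : ℝ) - t - S + x) * hahnH N S T (t + 1) k x)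
          / (Real.sqrt (((t : ℝ) + N) * ((T : ℝ) + N - t - 1))
            * Real.sqrt (gram N S T (t + 1) k k)) := by
    intro k hk
    have hklt : k < t + N := Finset.mem_range.mp hk
    have hkc : (k : ℝ) + 1 ≤ (t : ℝ) + N := by exact_mod_cast hklt
    have hγ0 : (0 : ℝ) ≤ ((t : ℝ) + N - k) * ((T : ℝ) + N - t - 1 - k) / ((t : ℝ) + N) := by
      apply div_nonneg _ hn.le
      apply mul_nonneg <;> nlinarith
    have hP0 : (0 : ℝ) ≤ (1 - (k : ℝ) / ((t : ℝ) + N)) * (1 - (k : ℝ) / ((T : ℝ) + N - t - 1)) := by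
      apply mul_nonneg
      · rw [sub_nonneg, div_le_one hn]; linarith
      · rw [sub_nonneg, div_le_one hA1]; linarith
    have hGt := gram_pos N S T t k hN
    have hG1 := gram_pos N S T (t + 1) k hN
    have hratio := bilinear N S T t k k hN htS htT hklt
    have hPD : ((1 - (k : ℝ) / ((t : ℝ) + N)) * (1 - (k : ℝ) / ((T : ℝ) + N - t - 1)))
        * (((t : ℝ) + N) * ((T : ℝ) + N - t - 1))
        = (((t : ℝ) + N - k) * ((T : ℝ) + N - t - 1 - k) / ((t : ℝ) + N)) * ((t : ℝ) + N) := by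
      field_simp <;> ring
    have key : ((1 - (k : ℝ) / ((t : ℝ) + N)) * (1 - (k : ℝ) / ((T : ℝ) + N - t - 1)))
        * (((t : ℝ) + N) * ((T : ℝ) + N - t - 1)) * gram N S T (t + 1) k k
        = (((t : ℝ) + N - k) * ((T : ℝ) + N - t - 1 - k) / ((t : ℝ) + N)) ^ 2
            * gram N S T t k k := by
      linear_combination (gram N S T (t + 1) k k) * hPD
        - (((t : ℝ) + N - k) * ((T : ℝ) + N - t - 1 - k) / ((t : ℝ) + N)) * hratio
    have hs : Real.sqrt ((1 - (k : ℝ) / ((t : ℝ) + N)) * (1 - (k : ℝ) / ((T : ℝ) + N - t - 1)))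
        * Real.sqrt (((t : ℝ) + N) * ((T : ℝ) + N - t - 1))
        * Real.sqrt (gram N S T (t + 1) k k)
        = (((t : ℝ) + N - k) * ((T : ℝ) + N - t - 1 - k) / ((t : ℝ) + N))
            * Real.sqrt (gram N S T t k k) := by
      rw [← Real.sqrt_mul hP0, ← Real.sqrt_mul (mul_nonneg hP0 hD.le)]
      rw [key, Real.sqrt_mul (sq_nonneg _), Real.sqrt_sq hγ0]
    rw [fOrth_eq, R1 N S T t k x hN htS hxlt]
    rw [← mul_div_assoc]
    rw [div_eq_div_iff (Real.sqrt_pos.mpr hGt).ne'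
      (mul_ne_zero hsqD (Real.sqrt_pos.mpr hG1).ne')]
    linear_combination (hahnH N S T t k x * Real.sqrt (wgt N S T t x)) * hs
  rw [Finset.sum_congr rfl (fun k hk => by rw [claim1 k hk])]
  -- Step 2: extend the sum to `range (t+N+1)`; the extra term vanishes
  have claim2 : Real.sqrt (wgt N S T t x)
      * (((S : ℝ) + N - 1 - x) * hahnH N S T (t + 1) (t + N) (x + 1)
        + ((T : ℝ) - t - S + x) * hahnH N S T (t + 1) (t + N) x)
      / (Real.sqrt (((t : ℝ) + N) * ((T : ℝ) + N - t - 1))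
        * Real.sqrt (gram N S T (t + 1) (t + N) (t + N)))
      * fOrth N S T (t + 1) (t + N) y = 0 := by
    have r1 := R1 N S T t (t + N) x hN htS hxlt
    rw [show ((t : ℝ) + N - ((t + N : ℕ) : ℝ)) = 0 by push_cast; ring, zero_mul,
      zero_div, zero_mul] at r1
    rw [r1, mul_zero, zero_div, zero_mul]
  have hbig : ∑ k ∈ Finset.range (t + N + 1),
      Real.sqrt (wgt N S T t x)
        * (((S : ℝ) + N - 1 - x) * hahnH N S T (t + 1) k (x + 1)
          + ((T : ℝ) - t - S + x) * hahnH N S T (t + 1) k x)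
        / (Real.sqrt (((t : ℝ) + N) * ((T : ℝ) + N - t - 1))
          * Real.sqrt (gram N S T (t + 1) k k))
        * fOrth N S T (t + 1) k y
      = ∑ k ∈ Finset.range (t + N),
      Real.sqrt (wgt N S T t x)
        * (((S : ℝ) + N - 1 - x) * hahnH N S T (t + 1) k (x + 1)
          + ((T : ℝ) - t - S + x) * hahnH N S T (t + 1) k x)
        / (Real.sqrt (((t : ℝ) + N) * ((T : ℝ) + N - t - 1))
          * Real.sqrt (gram N S T (t + 1) k k))
        * fOrth N S T (t + 1) k y := by
    rw [Finset.sum_range_succ, claim2, add_zero]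
  rw [← hbig]
  -- Step 3: rewrite each summand through `1/gram` and apply dual orthogonality
  have per3 : ∀ k ∈ Finset.range (t + N + 1),
      Real.sqrt (wgt N S T t x)
        * (((S : ℝ) + N - 1 - x) * hahnH N S T (t + 1) k (x + 1)
          + ((T : ℝ) - t - S + x) * hahnH N S T (t + 1) k x)
        / (Real.sqrt (((t : ℝ) + N) * ((T : ℝ) + N - t - 1))
          * Real.sqrt (gram N S T (t + 1) k k))
        * fOrth N S T (t + 1) k y
      = Real.sqrt (wgt N S T t x) * Real.sqrt (wgt N S T (t + 1) y)
          / Real.sqrt (((t : ℝ) + N) * ((T : ℝ) + N - t - 1))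
        * (((S : ℝ) + N - 1 - x)
            * (hahnH N S T (t + 1) k (x + 1) * hahnH N S T (t + 1) k y
              / gram N S T (t + 1) k k)
          + ((T : ℝ) - t - S + x)
            * (hahnH N S T (t + 1) k x * hahnH N S T (t + 1) k y
              / gram N S T (t + 1) k k)) := by
    intro k _
    have hG1 := gram_pos N S T (t + 1) k hN
    have hGG := Real.mul_self_sqrt hG1.le
    rw [fOrth_eq, div_mul_div_comm]
    rw [show (Real.sqrt (((t : ℝ) + N) * ((T : ℝ) + N - t - 1))
          * Real.sqrt (gram N S T (t + 1) k k)) * Real.sqrt (gram N S T (t + 1) k k)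
        = Real.sqrt (((t : ℝ) + N) * ((T : ℝ) + N - t - 1)) * gram N S T (t + 1) k k from by
      rw [mul_assoc, hGG]]
    conv_rhs => rw [← mul_div_assoc, ← mul_div_assoc, ← add_div, div_mul_div_comm]
    congr 1
    ring
  rw [Finset.sum_congr rfl per3, ← Finset.mul_sum, Finset.sum_add_distrib,
    ← Finset.mul_sum, ← Finset.mul_sum]
  rw [dual_orth N S T t hN htS htT (show x + 1 ≤ t + N by omega) hy,
    dual_orth N S T t hN htS htT (show x ≤ t + N by omega) hy]
  -- Step 4: case analysis on the deltas
  have hwty := wgt_pos N S T (t + 1) y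
  have hwtx := wgt_pos N S T t x
  have hsd : Real.sqrt (wgt N S T t x / wgt N S T (t + 1) y)
      = Real.sqrt (wgt N S T t x) / Real.sqrt (wgt N S T (t + 1) y) :=
    Real.sqrt_div hwtx.le _
  have hsq := Real.mul_self_sqrt hwty.le
  have hsqw : Real.sqrt (wgt N S T (t + 1) y) ≠ 0 := (Real.sqrt_pos.mpr hwty).ne'
  by_cases h1 : y = x + 1
  · subst h1
    rw [if_pos rfl, if_neg (by omega : ¬x = x + 1), if_pos rfl, if_neg (by omega : ¬x + 1 = x),
      hsd]
    conv_lhs => rw [show (1 : ℝ) / wgt N S T (t + 1) (x + 1)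
      = 1 / (Real.sqrt (wgt N S T (t + 1) (x + 1)) * Real.sqrt (wgt N S T (t + 1) (x + 1))) from by
        rw [hsq]]
    rw [mul_zero, add_zero]
    field_simp
    ring
  · by_cases h2 : y = x
    · subst h2
      rw [if_neg (by omega : ¬y + 1 = y), if_pos rfl, if_neg (by omega : ¬y = y + 1),
        if_pos rfl, hsd]
      conv_lhs => rw [show (1 : ℝ) / wgt N S T (t + 1) y
        = 1 / (Real.sqrt (wgt N S T (t + 1) y) * Real.sqrt (wgt N S T (t + 1) y)) from by
          rw [hsq]]
      rw [mul_zero, zero_add]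
      field_simp
      ring
    · rw [if_neg (fun hc => h1 hc.symm), if_neg (fun hc => h2 hc.symm), if_neg h1, if_neg h2]
      simp
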